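/- arXiv:2206.09568 — 3 statements merged into one kernel-verified Lean document; each statement's English description precedes it below -/
import Mathlib

section
/- Let d ≥ 1, let ρ, e : ℝ^d → ℝ be differentiable, let S : ℝ² → ℝ be twice continuously differentiable, let ε > 0, set s(x) := S(ρ(x),e(x)) and l := ε∇(ρe). Then at every point x ∈ ℝ^d, −ε∇ρ · ∇[(e·S_e − ρ·S_ρ)∘(ρ,e)] + l · ∇[S_e∘(ρ,e)] + ε∇ρ · ∇s = ε[(ρ S_ρρ + 2 S_ρ)|∇ρ|² + 2 ρ S_ρe (∇ρ · ∇e) + ρ S_ee |∇e|²], where all partial derivatives S_ρ, S_e, S_ρρ, S_ρe, S_ee are evaluated at (ρ(x), e(x)). -/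
open scoped BigOperators

/-- Spatial partial derivative `∂_i f (x)` of a scalar field on `ℝ^d`. -/
noncomputable def spd {d : ℕ} (f : (Fin d → ℝ) → ℝ) (i : Fin d) (x : Fin d → ℝ) : ℝ :=
  fderiv ℝ f x (Pi.single i 1)

/-- First partial derivative of `S(ρ,e)` in the first argument. -/
noncomputable def Sd1 (S : ℝ × ℝ → ℝ) (q : ℝ × ℝ) : ℝ := fderiv ℝ S q (1, 0)

/-- First partial derivative of `S(ρ,e)` in the second argument. -/
noncomputable def Sd2 (S : ℝ × ℝ → ℝ) (q : ℝ × ℝ) : ℝ := fderiv ℝ S q (0, 1)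


lemma spd_comp {d : ℕ} {ρ e : (Fin d → ℝ) → ℝ} {G : ℝ × ℝ → ℝ} {x : Fin d → ℝ}
    (hρ : DifferentiableAt ℝ ρ x) (he : DifferentiableAt ℝ e x)
    (hG : DifferentiableAt ℝ G (ρ x, e x)) (i : Fin d) :
    spd (fun y => G (ρ y, e y)) i x
      = Sd1 G (ρ x, e x) * spd ρ i x + Sd2 G (ρ x, e x) * spd e i x := by
  have hF : HasFDerivAt (fun y => (ρ y, e y)) ((fderiv ℝ ρ x).prod (fderiv ℝ e x)) x :=
    HasFDerivAt.prodMk hρ.hasFDerivAt he.hasFDerivAt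
  have hcomp : HasFDerivAt (fun y => G (ρ y, e y))
      ((fderiv ℝ G (ρ x, e x)).comp ((fderiv ℝ ρ x).prod (fderiv ℝ e x))) x :=
    hG.hasFDerivAt.comp x hF
  rw [spd, hcomp.fderiv]
  simp only [ContinuousLinearMap.comp_apply, ContinuousLinearMap.prod_apply]
  set a := fderiv ℝ ρ x (Pi.single i 1) with ha
  set b := fderiv ℝ e x (Pi.single i 1) with hb
  have h : ((a, b) : ℝ × ℝ) = a • ((1:ℝ), (0:ℝ)) + b • ((0:ℝ), (1:ℝ)) := by
    simp [Prod.ext_iff]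
  rw [h, map_add, map_smul, map_smul, smul_eq_mul, smul_eq_mul, Sd1, Sd2, spd, spd, ← ha, ← hb]
  ring

lemma diff_fderiv_apply {S : ℝ × ℝ → ℝ} (hS : ContDiff ℝ 2 S) (v : ℝ × ℝ) :
    Differentiable ℝ (fun p => fderiv ℝ S p v) := by
  have h1 : ContDiff ℝ 1 (fderiv ℝ S) := hS.fderiv_right (by norm_num)
  exact fun q => ((ContinuousLinearMap.apply ℝ ℝ v).differentiable.differentiableAt.comp q
    (h1.differentiable (by norm_num) q))

lemma fderiv_fderiv_apply {S : ℝ × ℝ → ℝ} (hS : ContDiff ℝ 2 S) (q v w : ℝ × ℝ) :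
    fderiv ℝ (fun p => fderiv ℝ S p v) q w = fderiv ℝ (fderiv ℝ S) q w v := by
  have h1 : ContDiff ℝ 1 (fderiv ℝ S) := hS.fderiv_right (by norm_num)
  have hd : DifferentiableAt ℝ (fderiv ℝ S) q := h1.differentiable (by norm_num) q
  have hc : HasFDerivAt (fun p => fderiv ℝ S p v)
      (((ContinuousLinearMap.apply ℝ ℝ v)).comp (fderiv ℝ (fderiv ℝ S) q)) q :=
    ((ContinuousLinearMap.apply ℝ ℝ v).hasFDerivAt.comp q hd.hasFDerivAt)
  rw [hc.fderiv]
  simp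

lemma symm2 {S : ℝ × ℝ → ℝ} (hS : ContDiff ℝ 2 S) (q : ℝ × ℝ) :
    Sd1 (Sd2 S) q = Sd2 (Sd1 S) q := by
  have hsymm : IsSymmSndFDerivAt ℝ S q := hS.contDiffAt.isSymmSndFDerivAt (by norm_num)
  rw [Sd1, Sd2]
  show fderiv ℝ (fun p => fderiv ℝ S p (0,1)) q (1,0)
      = fderiv ℝ (fun p => fderiv ℝ S p (1,0)) q (0,1)
  rw [fderiv_fderiv_apply hS, fderiv_fderiv_apply hS]
  exact hsymm _ _

/-- the quadratic form `J₁` identity: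
`−ε∇ρ·∇[(e S_e − ρ S_ρ)∘(ρ,e)] + ε∇(ρe)·∇[S_e∘(ρ,e)] + ε∇ρ·∇s
  = ε[(ρ S_ρρ + 2 S_ρ)|∇ρ|² + 2ρ S_ρe ∇ρ·∇e + ρ S_ee |∇e|²]`. -/
theorem stmt_1 {d : ℕ} (hd : 1 ≤ d) (ρ e : (Fin d → ℝ) → ℝ) (S : ℝ × ℝ → ℝ)
    (ε : ℝ) (hε : 0 < ε)
    (hρ : Differentiable ℝ ρ) (he : Differentiable ℝ e) (hS : ContDiff ℝ 2 S) :
    ∀ x : Fin d → ℝ,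
      -(∑ i, (ε * spd ρ i x) *
          spd (fun y => e y * Sd2 S (ρ y, e y) - ρ y * Sd1 S (ρ y, e y)) i x)
        + (∑ i, (ε * spd (fun y => ρ y * e y) i x) * spd (fun y => Sd2 S (ρ y, e y)) i x)
        + (∑ i, (ε * spd ρ i x) * spd (fun y => S (ρ y, e y)) i x)
      = ε * ((ρ x * Sd1 (Sd1 S) (ρ x, e x) + 2 * Sd1 S (ρ x, e x)) * (∑ i, (spd ρ i x) ^ 2)
          + 2 * ρ x * Sd2 (Sd1 S) (ρ x, e x) * (∑ i, spd ρ i x * spd e i x)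
          + ρ x * Sd2 (Sd2 S) (ρ x, e x) * (∑ i, (spd e i x) ^ 2)) := by
  intro x
  have hS1 : Differentiable ℝ (Sd1 S) := diff_fderiv_apply hS (1, 0)
  have hS2 : Differentiable ℝ (Sd2 S) := diff_fderiv_apply hS (0, 1)
  have hSd : Differentiable ℝ S := hS.differentiable (by norm_num)
  set q := (ρ x, e x) with hq
  -- chain rules
  have hs3 : ∀ i, spd (fun y => S (ρ y, e y)) i x
      = Sd1 S q * spd ρ i x + Sd2 S q * spd e i x :=
    fun i => spd_comp (hρ x) (he x) (hSd q) i
  have hc2 : ∀ i, spd (fun y => Sd2 S (ρ y, e y)) i x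
      = Sd2 (Sd1 S) q * spd ρ i x + Sd2 (Sd2 S) q * spd e i x := by
    intro i
    rw [spd_comp (hρ x) (he x) (hS2 q) i, symm2 hS q]
  have hc1 : ∀ i, spd (fun y => Sd1 S (ρ y, e y)) i x
      = Sd1 (Sd1 S) q * spd ρ i x + Sd2 (Sd1 S) q * spd e i x :=
    fun i => spd_comp (hρ x) (he x) (hS1 q) i
  -- product rule for ρ e
  have hpe : ∀ i, spd (fun y => ρ y * e y) i x = spd ρ i x * e x + ρ x * spd e i x := by
    intro i
    rw [spd, fderiv_fun_mul (hρ x) (he x)]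
    simp only [ContinuousLinearMap.add_apply, ContinuousLinearMap.smul_apply, smul_eq_mul]
    rw [spd, spd]; ring
  -- differentiability of composed fields
  have hA2 : DifferentiableAt ℝ (fun y => Sd2 S (ρ y, e y)) x :=
    DifferentiableAt.comp (g := Sd2 S) x (hS2 q) (DifferentiableAt.prodMk (hρ x) (he x))
  have hB2 : DifferentiableAt ℝ (fun y => Sd1 S (ρ y, e y)) x :=
    DifferentiableAt.comp (g := Sd1 S) x (hS1 q) (DifferentiableAt.prodMk (hρ x) (he x))
  have hA : DifferentiableAt ℝ (fun y => e y * Sd2 S (ρ y, e y)) x :=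
    (he x).mul hA2
  have hB : DifferentiableAt ℝ (fun y => ρ y * Sd1 S (ρ y, e y)) x :=
    (hρ x).mul hB2
  have ht1 : ∀ i, spd (fun y => e y * Sd2 S (ρ y, e y) - ρ y * Sd1 S (ρ y, e y)) i x
      = (spd e i x * Sd2 S q + e x * (Sd2 (Sd1 S) q * spd ρ i x + Sd2 (Sd2 S) q * spd e i x))
        - (spd ρ i x * Sd1 S q
            + ρ x * (Sd1 (Sd1 S) q * spd ρ i x + Sd2 (Sd1 S) q * spd e i x)) := by
    intro i
    rw [spd, fderiv_fun_sub hA hB, ContinuousLinearMap.sub_apply]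
    rw [fderiv_fun_mul (he x) hA2, fderiv_fun_mul (hρ x) hB2]
    simp only [ContinuousLinearMap.add_apply, ContinuousLinearMap.smul_apply, smul_eq_mul]
    have e1 := hc2 i
    have e2 := hc1 i
    rw [spd] at e1 e2
    rw [e1, e2, spd, spd]
    ring
  simp only [ht1, hc2, hs3, hpe]
  rw [← Finset.sum_neg_distrib, ← Finset.sum_add_distrib, ← Finset.sum_add_distrib,
      Finset.mul_sum, Finset.mul_sum, Finset.mul_sum, ← Finset.sum_add_distrib,
      ← Finset.sum_add_distrib, Finset.mul_sum]
  exact Finset.sum_congr rfl fun i _ => by ring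
end

section
/- Let γ > 1, ρ > 0, e > 0 and let f', f'' be real numbers (the first and second derivatives of a function f at the value s). Define the 2×2 symmetric matrix M with entries M₁₁ = (γ−1)(f' − (γ−1)f'')/ρ, M₁₂ = M₂₁ = (γ−1)f''/e, M₂₂ = ρ(f' − f'')/e². Then M is positive definite if and only if f' > 0 and f' − γ f'' > 0. -/
open scoped BigOperators

lemma posDef_fin_two (a b d : ℝ) :
    Matrix.PosDef (!![a, b; b, d] : Matrix (Fin 2) (Fin 2) ℝ) ↔
      0 < a ∧ 0 < a * d - b ^ 2 := by
  rw [Matrix.posDef_iff_dotProduct_mulVec]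
  constructor
  · rintro ⟨_, h⟩
    have h1 := h (x := ![1, 0]) (by intro hv; simpa using congrFun hv 0)
    simp [Matrix.mulVec, dotProduct, Fin.sum_univ_two] at h1
    have h2 := h (x := ![b, -a]) ?_
    · simp [Matrix.mulVec, dotProduct, Fin.sum_univ_two] at h2
      exact ⟨h1, by nlinarith [h1, h2]⟩
    · intro hv
      have := congrFun hv 1
      simp at this
      exact absurd this (by simpa using h1.ne')
  · rintro ⟨ha, hdet⟩
    refine ⟨?_, fun x hx => ?_⟩
    · ext i j
      fin_cases i <;> fin_cases j <;> simp [Matrix.conjTranspose, Matrix.transpose]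
    · have hx0 : x 0 ≠ 0 ∨ x 1 ≠ 0 := by
        by_contra hc
        push_neg at hc
        exact hx (funext fun i => by fin_cases i <;> simp [hc.1, hc.2])
      simp [Matrix.mulVec, dotProduct, Fin.sum_univ_two]
      rcases eq_or_ne (x 1) 0 with h1 | h1
      · have h0 : x 0 ≠ 0 := by tauto
        rw [h1]
        nlinarith [mul_self_pos.2 h0]
      · nlinarith [sq_nonneg (a * x 0 + b * x 1), mul_pos hdet (mul_self_pos.2 h1)]

/-- for `γ > 1`, `ρ > 0`, `e > 0`, the matrix
`M = [[(γ−1)(f' − (γ−1)f'')/ρ, (γ−1)f''/e], [(γ−1)f''/e, ρ(f' − f'')/e²]]`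
is positive definite iff `f' > 0` and `f' − γ f'' > 0`. -/
theorem stmt_12 (γ ρ e f' f'' : ℝ) (hγ : 1 < γ) (hρ : 0 < ρ) (he : 0 < e) :
    Matrix.PosDef
      (!![(γ - 1) * (f' - (γ - 1) * f'') / ρ, (γ - 1) * f'' / e;
          (γ - 1) * f'' / e, ρ * (f' - f'') / e ^ 2] : Matrix (Fin 2) (Fin 2) ℝ)
      ↔ (0 < f' ∧ 0 < f' - γ * f'') := by
  rw [posDef_fin_two]
  have hγ1 : 0 < γ - 1 := by linarith
  have he2 : (0 : ℝ) < e ^ 2 := by positivity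
  have key : (γ - 1) * (f' - (γ - 1) * f'') / ρ * (ρ * (f' - f'') / e ^ 2)
      - ((γ - 1) * f'' / e) ^ 2 = (γ - 1) * (f' * (f' - γ * f'')) / e ^ 2 := by
    field_simp
    ring
  rw [key]
  constructor
  · rintro ⟨ha, hdet⟩
    have h1 : 0 < f' - (γ - 1) * f'' := by
      rcases div_pos_iff.mp ha with ⟨h, _⟩ | ⟨_, h⟩
      · nlinarith
      · linarith
    have h2 : 0 < f' * (f' - γ * f'') := by
      rcases div_pos_iff.mp hdet with ⟨h, _⟩ | ⟨_, h⟩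
      · nlinarith
      · linarith
    have hf : 0 < f' := by
      by_contra hc
      push_neg at hc
      nlinarith [mul_nonpos_of_nonpos_of_nonneg hc h1.le]
    exact ⟨hf, ((mul_pos_iff.mp h2).resolve_right (fun h => absurd h.1 (not_lt.2 hf.le))).2⟩
  · rintro ⟨hf, hg⟩
    refine ⟨div_pos ?_ hρ, div_pos (by positivity) he2⟩
    nlinarith [mul_pos hγ1 hg]
end

section
/- Let γ > 1, d ≥ 1 and let f : ℝ → ℝ be twice continuously differentiable. On the open set Ω := {(ρ, m, E, B) ∈ ℝ × ℝ^d × ℝ × ℝ^d : ρ > 0 and E − |m|²/(2ρ) − |B|²/2 > 0}, define e(U) := (E − |m|²/(2ρ) − |B|²/2)/ρ, s(U) := ln e(U) − (γ−1) ln ρ, and F(U) := −ρ f(s(U)). Then at each point U ∈ Ω, the Hessian (second derivative bilinear form) of F is positive definite if and only if f'(s(U)) > 0 and f'(s(U)) − γ f''(s(U)) > 0. -/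
open scoped BigOperators
set_option maxHeartbeats 1000000

/-- Specific internal energy `e(U) = (E − |m|²/(2ρ) − |B|²/2)/ρ` of an MHD state
`U = (ρ, m, E, B)`. -/
noncomputable def eState {d : ℕ} (U : ℝ × (Fin d → ℝ) × ℝ × (Fin d → ℝ)) : ℝ :=
  (U.2.2.1 - (∑ i, (U.2.1 i) ^ 2) / (2 * U.1) - (∑ i, (U.2.2.2 i) ^ 2) / 2) / U.1

/-- Ideal-gas specific entropy `s(U) = ln e(U) − (γ−1) ln ρ`. -/
noncomputable def sState (γ : ℝ) {d : ℕ} (U : ℝ × (Fin d → ℝ) × ℝ × (Fin d → ℝ)) : ℝ :=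
  Real.log (eState U) - (γ - 1) * Real.log U.1

/-- Generalized entropy `F(U) = −ρ f(s(U))`. -/
noncomputable def FState (γ : ℝ) (f : ℝ → ℝ) {d : ℕ}
    (U : ℝ × (Fin d → ℝ) × ℝ × (Fin d → ℝ)) : ℝ :=
  -(U.1 * f (sState γ U))

lemma hessian_line {E' : Type*} [NormedAddCommGroup E'] [NormedSpace ℝ E'] {F : E' → ℝ}
    {U : E'} (v : E') (hF : ContDiffAt ℝ 2 F U) :
    fderiv ℝ (fun W => fderiv ℝ F W v) U v
      = deriv (deriv (fun t : ℝ => F (U + t • v))) 0 := by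
  have hd1 : ContDiffAt ℝ 1 (fderiv ℝ F) U := hF.fderiv_right (by norm_num)
  have hdf : DifferentiableAt ℝ (fderiv ℝ F) U := hd1.differentiableAt one_ne_zero
  -- step 1: LHS = (fderiv (fderiv F) U v) v
  have h1 : fderiv ℝ (fun W => fderiv ℝ F W v) U v = (fderiv ℝ (fderiv ℝ F) U v) v := by
    have : (fun W => fderiv ℝ F W v)
        = (ContinuousLinearMap.apply ℝ ℝ v) ∘ (fderiv ℝ F) := rfl
    rw [this, fderiv_comp U (ContinuousLinearMap.apply ℝ ℝ v).differentiableAt hdf]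
    simp
  -- step 2: ψ
  set ψ : ℝ → ℝ := fun t => fderiv ℝ F (U + t • v) v with hψdef
  have hline : ∀ t : ℝ, HasDerivAt (fun t : ℝ => U + t • v) v t := by
    intro t
    simpa using ((hasDerivAt_id t).smul_const v).const_add U
  have hψ : HasDerivAt ψ ((fderiv ℝ (fderiv ℝ F) U v) v) 0 := by
    have hc : HasDerivAt (fun t : ℝ => fderiv ℝ F (U + t • v))
        (fderiv ℝ (fderiv ℝ F) U v) 0 := by
      have h0 : HasFDerivAt (fderiv ℝ F) (fderiv ℝ (fderiv ℝ F) U) (U + (0:ℝ) • v) := by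
        simpa using hdf.hasFDerivAt
      simpa [Function.comp_def] using h0.comp_hasDerivAt 0 (hline 0)
    simpa using hc.clm_apply (hasDerivAt_const 0 v)
  -- step 3: eventual differentiability
  have hev : ∀ᶠ W in nhds U, DifferentiableAt ℝ F W := by
    filter_upwards [hF.eventually (by norm_num)] with W hW
    exact hW.differentiableAt two_ne_zero
  have htend : Filter.Tendsto (fun t : ℝ => U + t • v) (nhds 0) (nhds U) := by
    have := ((hline 0).continuousAt)
    unfold ContinuousAt at this
    simpa using this
  have hev2 : ∀ᶠ t : ℝ in nhds 0, DifferentiableAt ℝ F (U + t • v) := htend.eventually hev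
  have heq : (deriv fun t : ℝ => F (U + t • v)) =ᶠ[nhds 0] ψ := by
    filter_upwards [hev2] with t ht
    exact (ht.hasFDerivAt.comp_hasDerivAt t (hline t)).deriv
  rw [h1, heq.deriv_eq, hψ.deriv]

lemma contDiffAt_FState (γ : ℝ) (f : ℝ → ℝ) (hf : ContDiff ℝ 2 f) {d : ℕ}
    (U : ℝ × (Fin d → ℝ) × ℝ × (Fin d → ℝ)) (hρ : 0 < U.1)
    (hε : 0 < U.2.2.1 - (∑ i, (U.2.1 i) ^ 2) / (2 * U.1) - (∑ i, (U.2.2.2 i) ^ 2) / 2) :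
    ContDiffAt ℝ 2 (FState γ f) U := by
  have h1 : ContDiff ℝ 2 (fun U : ℝ × (Fin d → ℝ) × ℝ × (Fin d → ℝ) => U.1) := contDiff_fst
  have hm : ContDiff ℝ 2 (fun U : ℝ × (Fin d → ℝ) × ℝ × (Fin d → ℝ) => U.2.1) :=
    contDiff_fst.comp contDiff_snd
  have hE : ContDiff ℝ 2 (fun U : ℝ × (Fin d → ℝ) × ℝ × (Fin d → ℝ) => U.2.2.1) :=
    contDiff_fst.comp (contDiff_snd.comp contDiff_snd)
  have hB : ContDiff ℝ 2 (fun U : ℝ × (Fin d → ℝ) × ℝ × (Fin d → ℝ) => U.2.2.2) :=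
    contDiff_snd.comp (contDiff_snd.comp contDiff_snd)
  have hsm : ContDiff ℝ 2 (fun U : ℝ × (Fin d → ℝ) × ℝ × (Fin d → ℝ) => ∑ i, (U.2.1 i) ^ 2) :=
    ContDiff.sum fun i _ => by exact ((ContinuousLinearMap.proj (R := ℝ) (φ := fun _ : Fin d => ℝ) i).contDiff.comp hm).pow 2
  have hsB : ContDiff ℝ 2 (fun U : ℝ × (Fin d → ℝ) × ℝ × (Fin d → ℝ) => ∑ i, (U.2.2.2 i) ^ 2) :=
    ContDiff.sum fun i _ => by exact ((ContinuousLinearMap.proj (R := ℝ) (φ := fun _ : Fin d => ℝ) i).contDiff.comp hB).pow 2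
  have hρ' : U.1 ≠ 0 := ne_of_gt hρ
  have hnum : ContDiffAt ℝ 2 (fun U : ℝ × (Fin d → ℝ) × ℝ × (Fin d → ℝ) =>
      U.2.2.1 - (∑ i, (U.2.1 i) ^ 2) / (2 * U.1) - (∑ i, (U.2.2.2 i) ^ 2) / 2) U := by
    exact ((hE.contDiffAt.sub (hsm.contDiffAt.div (contDiffAt_const.mul h1.contDiffAt)
      (by simpa using hρ'))).sub (hsB.contDiffAt.div contDiffAt_const two_ne_zero))
  have he : ContDiffAt ℝ 2 (eState (d := d)) U := hnum.div h1.contDiffAt hρ'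
  have hepos : eState U ≠ 0 := ne_of_gt (div_pos hε hρ)
  have hs : ContDiffAt ℝ 2 (sState γ (d := d)) U :=
    (he.log hepos).sub (contDiffAt_const.mul (h1.contDiffAt.log hρ'))
  exact ((h1.contDiffAt.mul ((hf.contDiffAt).comp U hs)).neg)

lemma second_deriv_ab (γ : ℝ) (f : ℝ → ℝ) (hf : ContDiff ℝ 2 f)
    (ρ r ε aa bb : ℝ) (b b' : ℝ → ℝ) (hρ : 0 < ρ) (hε : 0 < ε)
    (hb : ∀ᶠ t in nhds (0:ℝ), HasDerivAt b (b' t) t)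
    (hb0 : b 0 = ε) (hb'0 : b' 0 = aa) (hb'' : HasDerivAt b' bb 0) :
    deriv (deriv (fun t : ℝ =>
        -((ρ + t * r) * f (Real.log (b t / (ρ + t * r)) - (γ - 1) * Real.log (ρ + t * r))))) 0
      = -(2 * r * (deriv f (Real.log (ε / ρ) - (γ - 1) * Real.log ρ)) * (aa / ε - γ * r / ρ)
          + ρ * (deriv (deriv f) (Real.log (ε / ρ) - (γ - 1) * Real.log ρ))
              * (aa / ε - γ * r / ρ) ^ 2
          + ρ * (deriv f (Real.log (ε / ρ) - (γ - 1) * Real.log ρ))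
              * (bb / ε - (aa / ε) ^ 2 + γ * (r / ρ) ^ 2)) := by
  have hdf : Differentiable ℝ f := hf.differentiable two_ne_zero
  have hdf' : Differentiable ℝ (deriv f) := by
    have h2 : ContDiff ℝ (1 + 1) f := by norm_num; exact hf
    exact ((contDiff_succ_iff_deriv.mp h2).2.2).differentiable one_ne_zero
  have ha : ∀ t : ℝ, HasDerivAt (fun t : ℝ => ρ + t * r) r t := fun t => by
    simpa using ((hasDerivAt_id t).mul_const r).const_add ρ
  have hapos : ∀ᶠ t : ℝ in nhds 0, 0 < ρ + t * r := by
    have h := (ha 0).continuousAt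
    unfold ContinuousAt at h
    have h0 : (0:ℝ) < ρ + 0 * r := by simpa using hρ
    exact h.eventually_const_lt h0
  have hbpos : ∀ᶠ t : ℝ in nhds 0, 0 < b t := by
    have h := (hb.self_of_nhds).continuousAt
    unfold ContinuousAt at h
    rw [hb0] at h
    exact h.eventually_const_lt hε
  -- replace φ by φ₂ using log of quotient
  have heq : (fun t : ℝ =>
        -((ρ + t * r) * f (Real.log (b t / (ρ + t * r)) - (γ - 1) * Real.log (ρ + t * r))))
      =ᶠ[nhds 0] (fun t : ℝ =>
        -((ρ + t * r) * f (Real.log (b t) - γ * Real.log (ρ + t * r)))) := by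
    filter_upwards [hapos, hbpos] with t h1 h2
    have harg : Real.log (b t / (ρ + t * r)) - (γ - 1) * Real.log (ρ + t * r)
        = Real.log (b t) - γ * Real.log (ρ + t * r) := by
      rw [Real.log_div h2.ne' h1.ne']; ring
    rw [harg]
  -- first derivative of φ₂
  have hs2 : ∀ᶠ t : ℝ in nhds 0, HasDerivAt
      (fun t : ℝ => Real.log (b t) - γ * Real.log (ρ + t * r))
      (b' t / b t - γ * (r / (ρ + t * r))) t := by
    filter_upwards [hapos, hbpos, hb] with t h1 h2 h3
    exact (h3.log h2.ne').sub (((ha t).log h1.ne').const_mul γ)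
  have hφ2' : ∀ᶠ t : ℝ in nhds 0, HasDerivAt
      (fun t : ℝ => -((ρ + t * r) * f (Real.log (b t) - γ * Real.log (ρ + t * r))))
      (-(r * f (Real.log (b t) - γ * Real.log (ρ + t * r))
        + (ρ + t * r) * (deriv f (Real.log (b t) - γ * Real.log (ρ + t * r))
            * (b' t / b t - γ * (r / (ρ + t * r)))))) t := by
    filter_upwards [hs2] with t hst
    have hfs : HasDerivAt (fun t : ℝ => f (Real.log (b t) - γ * Real.log (ρ + t * r)))
        (deriv f (Real.log (b t) - γ * Real.log (ρ + t * r))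
          * (b' t / b t - γ * (r / (ρ + t * r)))) t := by
      simpa [Function.comp_def] using
        ((hdf _).hasDerivAt.comp t hst)
    exact ((ha t).mul hfs).neg
  -- identify deriv (deriv φ) 0 with deriv ψ₂ 0
  have heq2 : deriv (fun t : ℝ =>
        -((ρ + t * r) * f (Real.log (b t / (ρ + t * r)) - (γ - 1) * Real.log (ρ + t * r))))
      =ᶠ[nhds 0] (fun t : ℝ =>
        -(r * f (Real.log (b t) - γ * Real.log (ρ + t * r))
          + (ρ + t * r) * (deriv f (Real.log (b t) - γ * Real.log (ρ + t * r))
              * (b' t / b t - γ * (r / (ρ + t * r)))))) := by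
    have h1 := heq.deriv
    have h2 : deriv (fun t : ℝ =>
        -((ρ + t * r) * f (Real.log (b t) - γ * Real.log (ρ + t * r))))
        =ᶠ[nhds (0:ℝ)] (fun t : ℝ =>
        -(r * f (Real.log (b t) - γ * Real.log (ρ + t * r))
          + (ρ + t * r) * (deriv f (Real.log (b t) - γ * Real.log (ρ + t * r))
              * (b' t / b t - γ * (r / (ρ + t * r)))))) := by
      filter_upwards [hφ2'] with t ht
      exact ht.deriv
    exact h1.trans h2
  rw [heq2.deriv_eq]
  -- now differentiate ψ₂ at 0
  have hs20 : HasDerivAt (fun t : ℝ => Real.log (b t) - γ * Real.log (ρ + t * r))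
      (b' 0 / b 0 - γ * (r / (ρ + 0 * r))) 0 := hs2.self_of_nhds
  have hfs0 : HasDerivAt (fun t : ℝ => f (Real.log (b t) - γ * Real.log (ρ + t * r)))
      (deriv f (Real.log (b 0) - γ * Real.log (ρ + 0 * r))
        * (b' 0 / b 0 - γ * (r / (ρ + 0 * r)))) 0 := by
    simpa [Function.comp_def] using ((hdf _).hasDerivAt.comp 0 hs20)
  have hdfs0 : HasDerivAt (fun t : ℝ => deriv f (Real.log (b t) - γ * Real.log (ρ + t * r)))
      (deriv (deriv f) (Real.log (b 0) - γ * Real.log (ρ + 0 * r))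
        * (b' 0 / b 0 - γ * (r / (ρ + 0 * r)))) 0 := by
    simpa [Function.comp_def] using ((hdf' _).hasDerivAt.comp 0 hs20)
  have hbb0 : HasDerivAt (fun t : ℝ => b' t / b t)
      ((bb * b 0 - b' 0 * b' 0) / (b 0) ^ 2) 0 := by
    have := hb''.div hb.self_of_nhds (by rw [hb0]; exact hε.ne')
    exact this
  have hra : HasDerivAt (fun t : ℝ => r / (ρ + t * r))
      ((0 * (ρ + 0 * r) - r * r) / (ρ + 0 * r) ^ 2) 0 := by
    exact (hasDerivAt_const 0 r).div (ha 0) (by simpa using hρ.ne')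
  have hq0 : HasDerivAt (fun t : ℝ => b' t / b t - γ * (r / (ρ + t * r)))
      ((bb * b 0 - b' 0 * b' 0) / (b 0) ^ 2
        - γ * ((0 * (ρ + 0 * r) - r * r) / (ρ + 0 * r) ^ 2)) 0 :=
    hbb0.sub (hra.const_mul γ)
  have hψ := ((hfs0.const_mul r).add ((ha 0).mul (hdfs0.mul hq0))).neg
  simp only [Pi.mul_apply] at hψ
  erw [hψ.deriv]
  -- final algebra
  have hs0eq : Real.log (b 0) - γ * Real.log (ρ + 0 * r)
      = Real.log (ε / ρ) - (γ - 1) * Real.log ρ := by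
    rw [hb0, Real.log_div hε.ne' hρ.ne']; ring
  rw [hs0eq, hb0, hb'0]
  have h1 : ρ + 0 * r = ρ := by ring
  rw [h1]
  field_simp
  ring

lemma second_deriv_concrete (γ : ℝ) (f : ℝ → ℝ) (hf : ContDiff ℝ 2 f)
    (ρ r E X M0 M1 M2 B0 B1 B2 ε aa q F1 F2 : ℝ) (hρ : 0 < ρ)
    (hεdef : ε = E - M0 / (2 * ρ) - B0 / 2) (hε : 0 < ε)
    (haa : aa = X - M1 / ρ + M0 * r / (2 * ρ ^ 2) - B1)
    (hq : q = aa / ε - γ * r / ρ)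
    (hF1 : F1 = deriv f (Real.log (ε / ρ) - (γ - 1) * Real.log ρ))
    (hF2 : F2 = deriv (deriv f) (Real.log (ε / ρ) - (γ - 1) * Real.log ρ)) :
    deriv (deriv (fun t : ℝ =>
        -((ρ + t * r) * f (Real.log ((E + t * X - (M0 + 2*t*M1 + t^2*M2) / (2*(ρ + t*r))
            - (B0 + 2*t*B1 + t^2*B2) / 2) / (ρ + t * r)) - (γ - 1) * Real.log (ρ + t * r))))) 0
      = F1 / ε * (M2 - 2*M1*(r/ρ) + M0*(r/ρ)^2 + ρ*B2)
        + ρ*(F1 - F2)*q^2 + 2*(γ-1)*F1*q*r + γ*(γ-1)*F1*r^2/ρ := by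
  have ha : ∀ t : ℝ, HasDerivAt (fun t : ℝ => ρ + t * r) r t := fun t => by
    simpa using ((hasDerivAt_id t).mul_const r).const_add ρ
  have hA : ∀ t : ℝ, HasDerivAt (fun t : ℝ => 2 * (ρ + t * r)) (2 * r) t := fun t => by
    simpa using (ha t).const_mul 2
  have hLin : ∀ (c cc t : ℝ), HasDerivAt (fun t : ℝ => c + 2 * t * cc) (2 * cc) t :=
    fun c cc t => by
      simpa using (((hasDerivAt_id t).const_mul 2).mul_const cc).const_add c
  have hP : ∀ t : ℝ, HasDerivAt (fun t : ℝ => M0 + 2*t*M1 + t^2*M2) (2*M1 + 2*t*M2) t :=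
    fun t => by
      exact ((hLin M0 M1 t).add ((hasDerivAt_pow 2 t).mul_const M2)).congr_deriv (by norm_num)
  have hQp : ∀ t : ℝ, HasDerivAt (fun t : ℝ => B0 + 2*t*B1 + t^2*B2) (2*B1 + 2*t*B2) t :=
    fun t => by
      exact ((hLin B0 B1 t).add ((hasDerivAt_pow 2 t).mul_const B2)).congr_deriv (by norm_num)
  have hEX : ∀ t : ℝ, HasDerivAt (fun t : ℝ => E + t * X) X t := fun t => by
    simpa using ((hasDerivAt_id t).mul_const X).const_add E
  have hapos : ∀ᶠ t : ℝ in nhds 0, 0 < ρ + t * r := by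
    have h := (ha 0).continuousAt
    unfold ContinuousAt at h
    have h0 : (0:ℝ) < ρ + 0 * r := by simpa using hρ
    exact h.eventually_const_lt h0
  have hb : ∀ᶠ t : ℝ in nhds 0, HasDerivAt
      (fun t : ℝ => E + t * X - (M0 + 2*t*M1 + t^2*M2) / (2*(ρ + t*r))
        - (B0 + 2*t*B1 + t^2*B2) / 2)
      (X - ((2*M1 + 2*t*M2) * (2*(ρ + t*r)) - (M0 + 2*t*M1 + t^2*M2) * (2*r))
          / (2*(ρ + t*r))^2 - (2*B1 + 2*t*B2) / 2) t := by
    filter_upwards [hapos] with t ht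
    exact ((hEX t).sub ((hP t).div (hA t) (by positivity))).sub ((hQp t).div_const 2)
  have hb0 : (fun t : ℝ => E + t * X - (M0 + 2*t*M1 + t^2*M2) / (2*(ρ + t*r))
      - (B0 + 2*t*B1 + t^2*B2) / 2) 0 = ε := by
    rw [hεdef]; norm_num
  have hb'0 : (fun t : ℝ => X - ((2*M1 + 2*t*M2) * (2*(ρ + t*r))
      - (M0 + 2*t*M1 + t^2*M2) * (2*r)) / (2*(ρ + t*r))^2 - (2*B1 + 2*t*B2) / 2) 0 = aa := by
    rw [haa]
    have hρ' : ρ ≠ 0 := hρ.ne'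
    norm_num
    field_simp
    ring
  have hρ0 : (0:ℝ) < ρ + 0 * r := by simpa using hρ
  have hb''c := ((hasDerivAt_const (0:ℝ) X).sub
      ((((hLin (2*M1) M2 0).mul (hA 0)).sub ((hP 0).mul_const (2*r))).div ((hA 0).pow 2)
        (pow_ne_zero 2 (mul_ne_zero two_ne_zero hρ0.ne')))).sub ((hLin (2*B1) B2 0).div_const 2)
  have hb'' : HasDerivAt (fun t : ℝ => X - ((2*M1 + 2*t*M2) * (2*(ρ + t*r))
      - (M0 + 2*t*M1 + t^2*M2) * (2*r)) / (2*(ρ + t*r))^2 - (2*B1 + 2*t*B2) / 2)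
      (-M2/ρ + 2*M1*r/ρ^2 - M0*r^2/ρ^3 - B2) 0 := by
    refine hb''c.congr_deriv ?_
    have hρ' : ρ ≠ 0 := hρ.ne'
    norm_num
    field_simp
    ring
  have key := second_deriv_ab γ f hf ρ r ε aa (-M2/ρ + 2*M1*r/ρ^2 - M0*r^2/ρ^3 - B2)
    _ _ hρ hε hb hb0 hb'0 hb''
  refine Eq.trans key ?_
  subst hq haa hF1 hF2
  have hρ' : ρ ≠ 0 := hρ.ne'
  have hε' : ε ≠ 0 := hε.ne'
  field_simp
  ring

noncomputable def Qform (γ : ℝ) {d : ℕ} (U v : ℝ × (Fin d → ℝ) × ℝ × (Fin d → ℝ))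
    (F1 F2 : ℝ) : ℝ :=
  F1 / (U.2.2.1 - (∑ i, (U.2.1 i)^2)/(2*U.1) - (∑ i, (U.2.2.2 i)^2)/2)
      * ((∑ i, (v.2.1 i)^2) - 2*(∑ i, U.2.1 i * v.2.1 i)*(v.1/U.1)
        + (∑ i, (U.2.1 i)^2)*(v.1/U.1)^2 + U.1*(∑ i, (v.2.2.2 i)^2))
    + U.1*(F1 - F2)*((v.2.2.1 - (∑ i, U.2.1 i * v.2.1 i)/U.1
          + (∑ i, (U.2.1 i)^2)*v.1/(2*U.1^2) - (∑ i, U.2.2.2 i * v.2.2.2 i))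
        / (U.2.2.1 - (∑ i, (U.2.1 i)^2)/(2*U.1) - (∑ i, (U.2.2.2 i)^2)/2) - γ*v.1/U.1)^2
    + 2*(γ-1)*F1*((v.2.2.1 - (∑ i, U.2.1 i * v.2.1 i)/U.1
          + (∑ i, (U.2.1 i)^2)*v.1/(2*U.1^2) - (∑ i, U.2.2.2 i * v.2.2.2 i))
        / (U.2.2.1 - (∑ i, (U.2.1 i)^2)/(2*U.1) - (∑ i, (U.2.2.2 i)^2)/2) - γ*v.1/U.1)*v.1
    + γ*(γ-1)*F1*v.1^2/U.1

lemma sumsq_expand {d : ℕ} (m w : Fin d → ℝ) (c : ℝ) :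
    ∑ i, (w i - c * m i)^2
      = (∑ i, (w i)^2) - 2*c*(∑ i, m i * w i) + c^2*(∑ i, (m i)^2) := by
  have h : ∀ i : Fin d, (w i - c * m i)^2
      = (w i)^2 - 2*c*(m i * w i) + c^2*(m i)^2 := fun i => by ring
  rw [Finset.sum_congr rfl fun i _ => h i]
  rw [Finset.sum_add_distrib, Finset.sum_sub_distrib, ← Finset.mul_sum, ← Finset.mul_sum]

lemma posdef_iff (γ : ℝ) (hγ : 1 < γ) {d : ℕ} (hd : 1 ≤ d)
    (U : ℝ × (Fin d → ℝ) × ℝ × (Fin d → ℝ)) (F1 F2 : ℝ)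
    (hρ : 0 < U.1)
    (hε : 0 < U.2.2.1 - (∑ i, (U.2.1 i)^2)/(2*U.1) - (∑ i, (U.2.2.2 i)^2)/2) :
    (∀ v : ℝ × (Fin d → ℝ) × ℝ × (Fin d → ℝ), v ≠ 0 → 0 < Qform γ U v F1 F2)
      ↔ (0 < F1 ∧ 0 < F1 - γ * F2) := by
  set ρ := U.1 with hρdef
  set m := U.2.1 with hmdef
  set EE := U.2.2.1 with hEdef
  set BB := U.2.2.2 with hBdef
  set M0 := ∑ i, (m i)^2 with hM0
  set B0 := ∑ i, (BB i)^2 with hB0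
  set ε := EE - M0/(2*ρ) - B0/2 with hεdef
  have hγ0 : (0:ℝ) < γ := lt_trans zero_lt_one hγ
  have hγ1 : (0:ℝ) < γ - 1 := by linarith
  have hρ' : ρ ≠ 0 := ne_of_gt hρ
  have hε' : ε ≠ 0 := ne_of_gt hε
  constructor
  · -- forward: instantiate
    intro hQ
    have i0 : Fin d := ⟨0, hd⟩
    -- first test vector
    have hF1pos : 0 < F1 := by
      set w1 : Fin d → ℝ := Pi.single i0 1 with hw1
      set v1 : ℝ × (Fin d → ℝ) × ℝ × (Fin d → ℝ) :=
        ((0:ℝ), w1, (∑ i, m i * w1 i)/ρ, (0 : Fin d → ℝ)) with hv1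
      have hne : v1 ≠ 0 := by
        intro h
        have h1 : w1 i0 = 0 := by
          have := congrArg (fun z : ℝ × (Fin d → ℝ) × ℝ × (Fin d → ℝ) => z.2.1 i0) h
          simpa [hv1] using this
        rw [hw1] at h1
        simp at h1
      have hq := hQ v1 hne
      have hw1sq : ∑ i, (w1 i)^2 = 1 := by
        rw [hw1]
        simp [Pi.single_apply]
      have hval : Qform γ U v1 F1 F2 = F1 / ε := by
        rw [Qform]
        simp only [hv1]
        rw [hw1sq]
        simp only [Pi.zero_apply, mul_zero, zero_pow, Finset.sum_const_zero]
        rw [← hmdef, ← hεdef]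
        simp only [← hρdef, zero_pow two_ne_zero, mul_zero, zero_mul, Finset.sum_const_zero, sub_zero, add_zero]
        field_simp
        ring
      rw [hval] at hq
      rcases div_pos_iff.mp hq with ⟨h, _⟩ | ⟨_, h⟩
      · exact h
      · linarith
    refine ⟨hF1pos, ?_⟩
    -- second test vector
    set r2 : ℝ := -(ρ/γ) with hr2
    set w2 : Fin d → ℝ := fun i => r2/ρ * m i with hw2
    set v2 : ℝ × (Fin d → ℝ) × ℝ × (Fin d → ℝ) :=
      (r2, w2, M0 * r2/(2*ρ^2), (0 : Fin d → ℝ)) with hv2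
    have hr2ne : r2 ≠ 0 := by
      rw [hr2]
      have := div_pos hρ hγ0
      intro h
      rw [neg_eq_zero] at h
      linarith
    have hne : v2 ≠ 0 := fun h => hr2ne (by simpa [hv2] using congrArg Prod.fst h)
    have hq := hQ v2 hne
    have hM1 : ∑ i, m i * w2 i = r2/ρ * M0 := by
      rw [hw2, hM0, Finset.mul_sum]
      exact Finset.sum_congr rfl fun i _ => by ring
    have hM2 : ∑ i, (w2 i)^2 = (r2/ρ)^2 * M0 := by
      rw [hw2, hM0, Finset.mul_sum]
      exact Finset.sum_congr rfl fun i _ => by ring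
    have hval : Qform γ U v2 F1 F2 = (ρ/γ) * (F1 - γ*F2) := by
      rw [Qform]
      simp only [hv2]
      rw [hM1, hM2]
      simp only [Pi.zero_apply, mul_zero, zero_pow, Finset.sum_const_zero]
      rw [← hmdef, ← hM0, ← hεdef, hr2]
      simp only [← hρdef, zero_pow two_ne_zero, mul_zero, zero_mul, Finset.sum_const_zero, sub_zero, add_zero]
      field_simp
      ring
    rw [hval] at hq
    have hrg : 0 < ρ/γ := div_pos hρ hγ0
    rcases mul_pos_iff.mp hq with ⟨_, h⟩ | ⟨h, _⟩
    · exact h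
    · linarith
  · rintro ⟨h1, h2⟩ v hv
    rw [Qform]
    rw [← hρdef, ← hmdef, ← hEdef, ← hBdef, ← hM0, ← hB0, ← hεdef]
    set r := v.1 with hr
    set w := v.2.1 with hw
    set X := v.2.2.1 with hX
    set Y := v.2.2.2 with hY
    set M1 := ∑ i, m i * w i with hM1
    set B1 := ∑ i, BB i * Y i with hB1
    set q : ℝ := (X - M1/ρ + M0*r/(2*ρ^2) - B1)/ε - γ*r/ρ with hq
    set SQ := ∑ i, (w i - (r/ρ) * m i)^2 with hSQ
    clear_value ρ m EE BB M0 B0 ε r w X Y M1 B1 q SQ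
    have hPexp : (∑ i, (w i)^2) - 2*M1*(r/ρ) + M0*(r/ρ)^2 + ρ*(∑ i, (Y i)^2)
        = SQ + ρ*(∑ i, (Y i)^2) := by
      rw [hSQ, sumsq_expand m w (r/ρ), ← hM1, ← hM0]
      ring
    rw [hPexp]
    have hquad : ρ*(F1 - F2)*q^2 + 2*(γ-1)*F1*q*r + γ*(γ-1)*F1*r^2/ρ
        = (ρ/(γ*(γ-1)*F1)) * ((γ*(γ-1)*F1/ρ*r + (γ-1)*F1*q)^2
            + (γ-1)*F1*(F1-γ*F2)*q^2) := by
      field_simp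
      ring
    rw [show F1/ε*(SQ + ρ*(∑ i, (Y i)^2)) + ρ*(F1 - F2)*q^2 + 2*(γ-1)*F1*q*r
        + γ*(γ-1)*F1*r^2/ρ
      = F1/ε*(SQ + ρ*(∑ i, (Y i)^2)) + ρ/(γ*(γ-1)*F1) * ((γ*(γ-1)*F1/ρ*r + (γ-1)*F1*q)^2
          + (γ-1)*F1*(F1-γ*F2)*q^2) from by linarith [hquad]]
    have hSQ0 : 0 ≤ SQ := by
      rw [hSQ]; exact Finset.sum_nonneg fun i _ => sq_nonneg _
    have hY0 : 0 ≤ ∑ i, (Y i)^2 := Finset.sum_nonneg fun i _ => sq_nonneg _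
    have hcoef : 0 < ρ/(γ*(γ-1)*F1) := div_pos hρ (by positivity)
    have hF1ε : 0 < F1/ε := div_pos h1 hε
    have hD : 0 < (γ-1)*F1*(F1-γ*F2) := mul_pos (mul_pos hγ1 h1) h2
    by_contra hcon
    push_neg at hcon
    have ht1 : 0 ≤ F1/ε * (SQ + ρ*(∑ i, (Y i)^2)) := by positivity
    have ht2in : 0 ≤ (γ*(γ-1)*F1/ρ*r + (γ-1)*F1*q)^2 + (γ-1)*F1*(F1-γ*F2)*q^2 :=
      add_nonneg (sq_nonneg _) (mul_nonneg hD.le (sq_nonneg q))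
    have hle : (ρ/(γ*(γ-1)*F1)) * ((γ*(γ-1)*F1/ρ*r + (γ-1)*F1*q)^2
        + (γ-1)*F1*(F1-γ*F2)*q^2) ≤ 0 := by linarith
    have hin0 : (γ*(γ-1)*F1/ρ*r + (γ-1)*F1*q)^2 + (γ-1)*F1*(F1-γ*F2)*q^2 ≤ 0 := by
      rcases mul_nonpos_iff.mp hle with ⟨_, h⟩ | ⟨h, _⟩
      · exact h
      · linarith
    have hz2 : (γ*(γ-1)*F1/ρ*r + (γ-1)*F1*q)^2 + (γ-1)*F1*(F1-γ*F2)*q^2 = 0 :=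
      le_antisymm hin0 ht2in
    have hq0 : q = 0 := by
      have hDq : (γ-1)*F1*(F1-γ*F2)*q^2 ≤ 0 := by
        linarith [sq_nonneg (γ*(γ-1)*F1/ρ*r + (γ-1)*F1*q)]
      have hq2 : q^2 ≤ 0 := by
        rcases mul_nonpos_iff.mp hDq with ⟨_, h⟩ | ⟨h, _⟩
        · exact h
        · linarith
      have : q^2 = 0 := le_antisymm hq2 (sq_nonneg q)
      exact pow_eq_zero_iff (n := 2) (by norm_num) |>.mp this
    have hr0 : r = 0 := by
      have hA : (γ*(γ-1)*F1/ρ*r + (γ-1)*F1*q)^2 = 0 := by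
        have h2' : 0 ≤ (γ-1)*F1*(F1-γ*F2)*q^2 := mul_nonneg hD.le (sq_nonneg q)
        linarith [sq_nonneg (γ*(γ-1)*F1/ρ*r + (γ-1)*F1*q)]
      have hA' := pow_eq_zero_iff (n := 2) (by norm_num) |>.mp hA
      rw [hq0, mul_zero, add_zero] at hA'
      have hc2 : γ*(γ-1)*F1/ρ ≠ 0 := ne_of_gt (by positivity)
      exact (mul_eq_zero.mp hA').resolve_left hc2
    have hz1 : SQ + ρ*(∑ i, (Y i)^2) = 0 := by
      have ht2z : (ρ/(γ*(γ-1)*F1)) * ((γ*(γ-1)*F1/ρ*r + (γ-1)*F1*q)^2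
          + (γ-1)*F1*(F1-γ*F2)*q^2) = 0 := by rw [hz2, mul_zero]
      have h0 : F1/ε * (SQ + ρ*(∑ i, (Y i)^2)) = 0 := by linarith
      rcases mul_eq_zero.mp h0 with h | h
      · exact absurd h hF1ε.ne'
      · exact h
    have hSQz : SQ = 0 := by linarith [mul_nonneg hρ.le hY0]
    have hYz : ∑ i, (Y i)^2 = 0 := by
      have hmul : ρ * (∑ i, (Y i)^2) = 0 := by linarith [mul_nonneg hρ.le hY0]
      exact (mul_eq_zero.mp hmul).resolve_left hρ'
    have hwz : ∀ i, w i = 0 := by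
      intro i
      have hall := (Finset.sum_eq_zero_iff_of_nonneg
        (fun i _ => sq_nonneg (w i - (r/ρ) * m i))).mp (hSQ ▸ hSQz) i (Finset.mem_univ i)
      have := pow_eq_zero_iff (n := 2) (by norm_num) |>.mp hall
      rw [hr0] at this
      simpa using this
    have hYz' : ∀ i, Y i = 0 := by
      intro i
      have hall := (Finset.sum_eq_zero_iff_of_nonneg
        (fun i _ => sq_nonneg (Y i))).mp hYz i (Finset.mem_univ i)
      exact pow_eq_zero_iff (n := 2) (by norm_num) |>.mp hall
    have hM1z : M1 = 0 := by
      rw [hM1]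
      exact Finset.sum_eq_zero fun i _ => by rw [hwz i, mul_zero]
    have hB1z : B1 = 0 := by
      rw [hB1]
      exact Finset.sum_eq_zero fun i _ => by rw [hYz' i, mul_zero]
    have hXz : X = 0 := by
      rw [hq, hr0, hM1z, hB1z] at hq0
      simp at hq0
      rcases hq0 with h | h
      · exact h
      · exact absurd h hε'
    apply hv
    have : v = (v.1, v.2.1, v.2.2.1, v.2.2.2) := rfl
    rw [this, ← hr, ← hw, ← hX, ← hY, hr0, hXz, funext hwz, funext hYz']
    rfl

/-- on the set of admissible MHD states (positive density and internal
energy), the Hessian bilinear form of `F = −ρ f(s)` at `U` is positive definite iff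
`f'(s(U)) > 0` and `f'(s(U)) − γ f''(s(U)) > 0`. -/
theorem stmt_13 (γ : ℝ) (hγ : 1 < γ) {d : ℕ} (hd : 1 ≤ d)
    (f : ℝ → ℝ) (hf : ContDiff ℝ 2 f) :
    ∀ U : ℝ × (Fin d → ℝ) × ℝ × (Fin d → ℝ),
      0 < U.1 → 0 < U.2.2.1 - (∑ i, (U.2.1 i) ^ 2) / (2 * U.1) - (∑ i, (U.2.2.2 i) ^ 2) / 2 →
      ((∀ v : ℝ × (Fin d → ℝ) × ℝ × (Fin d → ℝ), v ≠ 0 →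
          0 < fderiv ℝ (fun W => fderiv ℝ (FState γ f) W v) U v)
        ↔ (0 < deriv f (sState γ U)
            ∧ 0 < deriv f (sState γ U) - γ * deriv (deriv f) (sState γ U))) := by
  intro U hρ hε
  have hkey : ∀ v : ℝ × (Fin d → ℝ) × ℝ × (Fin d → ℝ),
      fderiv ℝ (fun W => fderiv ℝ (FState γ f) W v) U v
        = Qform γ U v (deriv f (sState γ U)) (deriv (deriv f) (sState γ U)) := by
    intro v
    rw [hessian_line v (contDiffAt_FState γ f hf U hρ hε)]
    have hfun : (fun t : ℝ => FState γ f (U + t • v)) = fun t : ℝ =>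
        -((U.1 + t * v.1) * f (Real.log ((U.2.2.1 + t * v.2.2.1
            - ((∑ i, (U.2.1 i)^2) + 2*t*(∑ i, U.2.1 i * v.2.1 i) + t^2*(∑ i, (v.2.1 i)^2))
              / (2*(U.1 + t * v.1))
            - ((∑ i, (U.2.2.2 i)^2) + 2*t*(∑ i, U.2.2.2 i * v.2.2.2 i)
              + t^2*(∑ i, (v.2.2.2 i)^2)) / 2) / (U.1 + t * v.1))
          - (γ - 1) * Real.log (U.1 + t * v.1))) := by
      funext t
      have hsq : ∀ (a b : Fin d → ℝ), ∑ i, (a i + t * b i)^2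
          = (∑ i, (a i)^2) + 2*t*(∑ i, a i * b i) + t^2*(∑ i, (b i)^2) := by
        intro a b
        rw [Finset.sum_congr rfl (fun i _ => show (a i + t*b i)^2
          = (a i)^2 + 2*t*(a i * b i) + t^2*(b i)^2 from by ring)]
        rw [Finset.sum_add_distrib, Finset.sum_add_distrib, ← Finset.mul_sum, ← Finset.mul_sum]
      simp only [FState, sState, eState, Prod.fst_add, Prod.snd_add, Prod.smul_fst,
        Prod.smul_snd, Pi.add_apply, Pi.smul_apply, smul_eq_mul]
      rw [hsq, hsq]
    rw [hfun]
    rw [second_deriv_concrete γ f hf U.1 v.1 U.2.2.1 v.2.2.1 (∑ i, (U.2.1 i)^2)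
      (∑ i, U.2.1 i * v.2.1 i) (∑ i, (v.2.1 i)^2) (∑ i, (U.2.2.2 i)^2)
      (∑ i, U.2.2.2 i * v.2.2.2 i) (∑ i, (v.2.2.2 i)^2)
      (U.2.2.1 - (∑ i, (U.2.1 i)^2)/(2*U.1) - (∑ i, (U.2.2.2 i)^2)/2)
      (v.2.2.1 - (∑ i, U.2.1 i * v.2.1 i)/U.1 + (∑ i, (U.2.1 i)^2)*v.1/(2*U.1^2)
        - (∑ i, U.2.2.2 i * v.2.2.2 i))
      ((v.2.2.1 - (∑ i, U.2.1 i * v.2.1 i)/U.1 + (∑ i, (U.2.1 i)^2)*v.1/(2*U.1^2)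
        - (∑ i, U.2.2.2 i * v.2.2.2 i))
        /(U.2.2.1 - (∑ i, (U.2.1 i)^2)/(2*U.1) - (∑ i, (U.2.2.2 i)^2)/2) - γ*v.1/U.1)
      (deriv f (sState γ U)) (deriv (deriv f) (sState γ U)) hρ rfl hε rfl rfl rfl rfl]
    rw [Qform]
  refine Iff.trans ?_
    (posdef_iff γ hγ hd U (deriv f (sState γ U)) (deriv (deriv f) (sState γ U)) hρ hε)
  exact forall_congr' fun v => imp_congr_right fun _ => by rw [hkey v]
end
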